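/- Let G ≤ GL(n, F) with F of characteristic zero, and let N be a normal subgroup of finite index in G such that every element of N of finite order is the identity (N is torsion-free). Then G is central-by-finite (G/Z(G) is finite) if and only if N is central in G. -/

import Mathlib

open scoped commutatorElement

theorem aux_comm_central {H : Type*} [Group H] (g h z w : H)
    (hz : z ∈ Subgroup.center H) (hw : w ∈ Subgroup.center H) :
    ⁅g * z, h * w⁆ = ⁅g, h⁆ := by
  rw [Subgroup.mem_center_iff] at hz hw
  have h1 : z * h * z⁻¹ = h := by rw [← hz h]; group
  have h2 : w * g⁻¹ * w⁻¹ = g⁻¹ := by rw [← hw g⁻¹]; group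
  simp only [commutatorElement_def, mul_inv_rev]
  have h3 : w * z⁻¹ = z⁻¹ * w := (hw z⁻¹).symm
  calc g * z * (h * w) * (z⁻¹ * g⁻¹) * (w⁻¹ * h⁻¹)
      = g * z * h * (w * z⁻¹) * g⁻¹ * w⁻¹ * h⁻¹ := by group
    _ = g * z * h * (z⁻¹ * w) * g⁻¹ * w⁻¹ * h⁻¹ := by rw [h3]
    _ = g * (z * h * z⁻¹) * (w * g⁻¹ * w⁻¹) * h⁻¹ := by group
    _ = g * h * g⁻¹ * h⁻¹ := by rw [h1, h2]

theorem aux_finite_commutatorSet {H : Type*} [Group H]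
    (h : (Subgroup.center H).FiniteIndex) : Finite (commutatorSet H) := by
  haveI := h
  haveI : Finite (H ⧸ Subgroup.center H) :=
    Subgroup.finite_quotient_of_finiteIndex
  have hsub : commutatorSet H ⊆ Set.range
      (fun p : (H ⧸ Subgroup.center H) × (H ⧸ Subgroup.center H) =>
        ⁅p.1.out, p.2.out⁆) := by
    rintro x ⟨g, h, rfl⟩
    refine ⟨(QuotientGroup.mk g, QuotientGroup.mk h), ?_⟩
    obtain ⟨z, hz⟩ := QuotientGroup.mk_out_eq_mul (Subgroup.center H) g
    obtain ⟨w, hw⟩ := QuotientGroup.mk_out_eq_mul (Subgroup.center H) h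
    simp only [hz, hw]
    exact aux_comm_central g h z w z.2 w.2
  exact Set.Finite.subset (Set.finite_range _) hsub


open Matrix

theorem aux_central_of_tf {H : Type*} [Group H] (N : Subgroup H) (hnorm : N.Normal)
    (htf : ∀ x ∈ N, IsOfFinOrder x → x = 1)
    (hZ : (Subgroup.center H).FiniteIndex) : N ≤ Subgroup.center H := by
  haveI := hZ
  haveI : Finite (commutatorSet H) := aux_finite_commutatorSet hZ
  haveI : Finite (_root_.commutator H) := inferInstance
  intro x hx
  rw [Subgroup.mem_center_iff]
  intro g
  have hcN : ⁅x, g⁆ ∈ N := by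
    have h1 : g * x⁻¹ * g⁻¹ ∈ N := hnorm.conj_mem x⁻¹ (N.inv_mem hx) g
    have : x * (g * x⁻¹ * g⁻¹) ∈ N := N.mul_mem hx h1
    simpa [commutatorElement_def, mul_assoc] using this
  have hcC : ⁅x, g⁆ ∈ _root_.commutator H :=
    Subgroup.commutator_mem_commutator (Subgroup.mem_top x) (Subgroup.mem_top g)
  have hfo : IsOfFinOrder (⁅x, g⁆) := by
    have h2 : IsOfFinOrder (⟨⁅x, g⁆, hcC⟩ : _root_.commutator H) :=
      isOfFinOrder_of_finite _
    have h3 := (_root_.commutator H).subtype.isOfFinOrder h2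
    simpa using h3
  have h1 : ⁅x, g⁆ = 1 := htf _ hcN hfo
  exact (commutatorElement_eq_one_iff_mul_comm.mp h1).symm

/-- Let `G ≤ GL(n,F)`, `char F = 0`, and `N ⊴ G` of finite index with `N` torsion-free.
Then `G` is central-by-finite iff `N` is central in `G`. -/
theorem stmt14 {n : ℕ} {F : Type*} [Field F] [CharZero F]
    (G : Subgroup (GL (Fin n) F)) (N : Subgroup G)
    (hnorm : N.Normal) (hfin : N.FiniteIndex)
    (htf : ∀ x ∈ N, IsOfFinOrder x → x = 1) :
    (Subgroup.center G).FiniteIndex ↔ N ≤ Subgroup.center G := by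
  constructor
  · exact aux_central_of_tf N hnorm htf
  · intro hle
    exact Subgroup.finiteIndex_of_le hle
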